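/- Let f : {-1,1}^5 → {-1,1} be defined by f(x) = sgn(x_1 - 3x_2 + x_3 - x_4 + 3x_5). For all p ∈ [0,1], with z drawn from the erasure distribution at rate p on {-1,0,1}^5 and F the multilinear extension of f, one has E|F(z)| = (7/4)p - (11/4)p² + (7/2)p³ - (5/2)p⁴ + p⁵. -/

import Mathlib

open Finset

noncomputable section

/-- Sign function: `1` for positive arguments, `-1` otherwise. -/
def sgn (t : ℝ) : ℝ := if 0 < t then 1 else -1

/-- Real value of a Boolean sign: `true ↦ 1`, `false ↦ -1`. -/
def val (b : Bool) : ℝ := if b then 1 else -1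

/-- Fourier coefficient `f̂(S) = 2^{-n} ∑_{x ∈ {-1,1}^n} f(x) ∏_{i∈S} x_i`. -/
def fCoeff (n : ℕ) (f : (Fin n → ℝ) → ℝ) (S : Finset (Fin n)) : ℝ :=
  (2 ^ n : ℝ)⁻¹ * ∑ b : Fin n → Bool, f (fun i => val (b i)) * ∏ i ∈ S, val (b i)

/-- Multilinear extension `F(z) = ∑_S f̂(S) ∏_{i∈S} z_i`. -/
def mlin (n : ℕ) (f : (Fin n → ℝ) → ℝ) (z : Fin n → ℝ) : ℝ :=
  ∑ S : Finset (Fin n), fCoeff n f S * ∏ i ∈ S, z i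

/-- Value of an erasure symbol: `0 ↦ 0`, `1 ↦ 1`, `2 ↦ -1`. -/
def eval3 (k : Fin 3) : ℝ := if k = 0 then 0 else if k = 1 then 1 else -1

/-- Erasure weight: `Pr[z_i = 0] = 1 - p`, `Pr[z_i = 1] = Pr[z_i = -1] = p/2`. -/
def wt (p : ℝ) (k : Fin 3) : ℝ := if k = 0 then 1 - p else p / 2

/-- `Φ_p(f) = E_z |F(z)|` under the erasure distribution at rate `p`. -/
def Phi (n : ℕ) (p : ℝ) (f : (Fin n → ℝ) → ℝ) : ℝ :=
  ∑ e : Fin n → Fin 3, (∏ i, wt p (e i)) * |mlin n f (fun i => eval3 (e i))|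

/-- `f(x) = sgn(x₁ - 3x₂ + x₃ - x₄ + 3x₅)`. -/
def f5 (x : Fin 5 → ℝ) : ℝ := sgn (x 0 - 3 * x 1 + x 2 - x 3 + 3 * x 4)

/-- `Maj₅(x) = sgn(x₁ + x₂ + x₃ + x₄ + x₅)`. -/
def maj5 (x : Fin 5 → ℝ) : ℝ := sgn (x 0 + x 1 + x 2 + x 3 + x 4)

lemma mlin_eq (n : ℕ) (f : (Fin n → ℝ) → ℝ) (z : Fin n → ℝ) :
    mlin n f z = (2 ^ n : ℝ)⁻¹ *
      ∑ b : Fin n → Bool, f (fun i => val (b i)) * ∏ i, (1 + val (b i) * z i) := by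
  have key : ∀ b : Fin n → Bool,
      ∏ i, (1 + val (b i) * z i) = ∑ S : Finset (Fin n), ∏ i ∈ S, (val (b i) * z i) := by
    intro b
    have h1 := Fintype.prod_add (fun _ : Fin n => (1:ℝ)) (fun i => val (b i) * z i)
    simp only [Finset.prod_const_one, one_mul] at h1
    rw [h1]
    exact Fintype.sum_bijective compl (Function.Involutive.bijective fun s => compl_compl s)
      _ _ (fun t => rfl)
  rw [mlin]
  simp only [fCoeff, key, Finset.mul_sum]
  rw [Finset.sum_comm]
  simp only [Finset.mul_sum, Finset.sum_mul]
  refine Finset.sum_congr rfl fun S _ => Finset.sum_congr rfl fun b _ => ?_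
  rw [Finset.prod_mul_distrib]
  ring
lemma sum_pi_succ {M : Type*} [AddCommMonoid M] {α : Type*} [Fintype α] {n : ℕ}
    (g : (Fin (n+1) → α) → M) :
    ∑ e : Fin (n+1) → α, g e = ∑ a : α, ∑ e : Fin n → α, g (Matrix.vecCons a e) := by
  rw [← Equiv.sum_comp (Fin.consEquiv fun _ => α) g, Fintype.sum_prod_type]
  rfl

lemma sum_pi_zero {M : Type*} [AddCommMonoid M] {α : Type*} [Fintype α] [DecidableEq α]
    (g : (Fin 0 → α) → M) : ∑ e : Fin 0 → α, g e = g ![] := by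
  rw [show (univ : Finset (Fin 0 → α)) = {![]} from by
    ext e; simp [Subsingleton.elim e ![], Subsingleton.elim (default : Fin 0 → α) ![]], Finset.sum_singleton]


lemma sum_finset_eq (g : Finset (Fin 5) → ℝ) :
    ∑ S : Finset (Fin 5), g S = ∑ b : Fin 5 → Bool, g (univ.filter fun i => b i) := by
  refine (Fintype.sum_bijective (fun b : Fin 5 → Bool => univ.filter fun i => b i) ?_
    _ _ (fun b => rfl)).symm
  rw [Fintype.bijective_iff_injective_and_card]
  constructor
  · intro b b' h
    funext i
    have := Finset.ext_iff.1 h i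
    simpa using this
  · simp [Fintype.card_finset]
lemma val_true : val true = 1 := rfl
lemma val_false : val false = -1 := rfl

set_option maxHeartbeats 2000000 in
lemma mlin_f5 (z : Fin 5 → ℝ) : mlin 5 f5 z =
    1/4 * z 0 - 1/2 * z 1 + 1/4 * z 2 - 1/4 * z 3 + 1/2 * z 4
      + 1/4 * (z 0 * z 2 * z 3) + 1/4 * (z 0 * z 1 * z 4) + 1/4 * (z 1 * z 2 * z 4)
      - 1/4 * (z 1 * z 3 * z 4) + 1/4 * (z 0 * z 1 * z 2 * z 3 * z 4) := by
  rw [mlin_eq]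
  simp only [f5, sgn, _root_.val, sum_pi_succ, sum_pi_zero, Fintype.sum_bool,
    Fin.prod_univ_five, Matrix.cons_val_zero, Matrix.cons_val_one,
    Matrix.head_cons, Matrix.cons_val_two, Matrix.cons_val_three, Matrix.cons_val_four,
    Matrix.vecTail, Matrix.vecHead, Function.comp, Matrix.cons_val_succ]
  norm_num [abs_of_nonneg, abs_of_nonpos]
  ring
lemma eval3_0 : eval3 0 = 0 := rfl
lemma eval3_1 : eval3 1 = 1 := rfl
lemma eval3_2 : eval3 2 = -1 := rfl
lemma wt_0 (p : ℝ) : wt p 0 = 1 - p := rfl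
lemma wt_1 (p : ℝ) : wt p 1 = p / 2 := rfl
lemma wt_2 (p : ℝ) : wt p 2 = p / 2 := rfl

def T (p : ℝ) (a b : Fin 3) : ℝ :=
  ∑ e : Fin 3 → Fin 3, (∏ i, wt p (e i)) *
    |mlin 5 f5 (fun i => eval3 (Matrix.vecCons a (Matrix.vecCons b e) i))|

lemma phi_decomp (p : ℝ) : Phi 5 p f5 = ∑ a : Fin 3, wt p a * ∑ b : Fin 3, wt p b * T p a b := by
  rw [Phi, sum_pi_succ]
  refine Finset.sum_congr rfl fun a _ => ?_
  rw [sum_pi_succ, Finset.mul_sum]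
  refine Finset.sum_congr rfl fun b _ => ?_
  rw [T, Finset.mul_sum, Finset.mul_sum]
  refine Finset.sum_congr rfl fun e _ => ?_
  simp only [Fin.prod_univ_succ, Matrix.cons_val_zero, Matrix.cons_val_succ]
  ring

set_option maxHeartbeats 1000000 in
lemma T00 (p : ℝ) : T p 0 0 = p - 3/4 * p^2 + 1/4 * p^3 := by
  rw [T]
  simp only [mlin_f5, sum_pi_succ, sum_pi_zero, Fin.sum_univ_three, Fin.prod_univ_succ,
    Fin.prod_univ_zero, Matrix.cons_val_zero, Matrix.cons_val_one, Matrix.cons_val_two,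
    Matrix.cons_val_three, Matrix.cons_val_four, Matrix.cons_val_succ, Matrix.head_cons,
    Matrix.vecHead, Matrix.vecTail, Function.comp, eval3_0, eval3_1, eval3_2,
    wt_0, wt_1, wt_2]
  norm_num [abs_of_nonneg, abs_of_nonpos]
  ring

set_option maxHeartbeats 1000000 in
lemma T01 (p : ℝ) : T p 0 1 = 1/2 + 1/2 * p^2 - 1/4 * p^3 := by
  rw [T]
  simp only [mlin_f5, sum_pi_succ, sum_pi_zero, Fin.sum_univ_three, Fin.prod_univ_succ,
    Fin.prod_univ_zero, Matrix.cons_val_zero, Matrix.cons_val_one, Matrix.cons_val_two,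
    Matrix.cons_val_three, Matrix.cons_val_four, Matrix.cons_val_succ, Matrix.head_cons,
    Matrix.vecHead, Matrix.vecTail, Function.comp, eval3_0, eval3_1, eval3_2,
    wt_0, wt_1, wt_2]
  norm_num [abs_of_nonneg, abs_of_nonpos]
  ring

set_option maxHeartbeats 1000000 in
lemma T02 (p : ℝ) : T p 0 2 = 1/2 + 1/2 * p^2 - 1/4 * p^3 := by
  rw [T]
  simp only [mlin_f5, sum_pi_succ, sum_pi_zero, Fin.sum_univ_three, Fin.prod_univ_succ,
    Fin.prod_univ_zero, Matrix.cons_val_zero, Matrix.cons_val_one, Matrix.cons_val_two,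
    Matrix.cons_val_three, Matrix.cons_val_four, Matrix.cons_val_succ, Matrix.head_cons,
    Matrix.vecHead, Matrix.vecTail, Function.comp, eval3_0, eval3_1, eval3_2,
    wt_0, wt_1, wt_2]
  norm_num [abs_of_nonneg, abs_of_nonpos]
  ring

set_option maxHeartbeats 1000000 in
lemma T10 (p : ℝ) : T p 1 0 = 1/4 + 1/4 * p + 1/4 * p^2 - 1/4 * p^3 := by
  rw [T]
  simp only [mlin_f5, sum_pi_succ, sum_pi_zero, Fin.sum_univ_three, Fin.prod_univ_succ,
    Fin.prod_univ_zero, Matrix.cons_val_zero, Matrix.cons_val_one, Matrix.cons_val_two,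
    Matrix.cons_val_three, Matrix.cons_val_four, Matrix.cons_val_succ, Matrix.head_cons,
    Matrix.vecHead, Matrix.vecTail, Function.comp, eval3_0, eval3_1, eval3_2,
    wt_0, wt_1, wt_2]
  norm_num [abs_of_nonneg, abs_of_nonpos]
  ring

set_option maxHeartbeats 1000000 in
lemma T20 (p : ℝ) : T p 2 0 = 1/4 + 1/4 * p + 1/4 * p^2 - 1/4 * p^3 := by
  rw [T]
  simp only [mlin_f5, sum_pi_succ, sum_pi_zero, Fin.sum_univ_three, Fin.prod_univ_succ,
    Fin.prod_univ_zero, Matrix.cons_val_zero, Matrix.cons_val_one, Matrix.cons_val_two,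
    Matrix.cons_val_three, Matrix.cons_val_four, Matrix.cons_val_succ, Matrix.head_cons,
    Matrix.vecHead, Matrix.vecTail, Function.comp, eval3_0, eval3_1, eval3_2,
    wt_0, wt_1, wt_2]
  norm_num [abs_of_nonneg, abs_of_nonpos]
  ring

set_option maxHeartbeats 1000000 in
lemma T11 (p : ℝ) : T p 1 1 = 1/4 + 1/2 * p + 1/4 * p^3 := by
  rw [T]
  simp only [mlin_f5, sum_pi_succ, sum_pi_zero, Fin.sum_univ_three, Fin.prod_univ_succ,
    Fin.prod_univ_zero, Matrix.cons_val_zero, Matrix.cons_val_one, Matrix.cons_val_two,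
    Matrix.cons_val_three, Matrix.cons_val_four, Matrix.cons_val_succ, Matrix.head_cons,
    Matrix.vecHead, Matrix.vecTail, Function.comp, eval3_0, eval3_1, eval3_2,
    wt_0, wt_1, wt_2]
  norm_num [abs_of_nonneg, abs_of_nonpos]
  ring

set_option maxHeartbeats 1000000 in
lemma T22 (p : ℝ) : T p 2 2 = 1/4 + 1/2 * p + 1/4 * p^3 := by
  rw [T]
  simp only [mlin_f5, sum_pi_succ, sum_pi_zero, Fin.sum_univ_three, Fin.prod_univ_succ,
    Fin.prod_univ_zero, Matrix.cons_val_zero, Matrix.cons_val_one, Matrix.cons_val_two,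
    Matrix.cons_val_three, Matrix.cons_val_four, Matrix.cons_val_succ, Matrix.head_cons,
    Matrix.vecHead, Matrix.vecTail, Function.comp, eval3_0, eval3_1, eval3_2,
    wt_0, wt_1, wt_2]
  norm_num [abs_of_nonneg, abs_of_nonpos]
  ring

set_option maxHeartbeats 1000000 in
lemma T12 (p : ℝ) : T p 1 2 = 3/4 + 1/4 * p^3 := by
  rw [T]
  simp only [mlin_f5, sum_pi_succ, sum_pi_zero, Fin.sum_univ_three, Fin.prod_univ_succ,
    Fin.prod_univ_zero, Matrix.cons_val_zero, Matrix.cons_val_one, Matrix.cons_val_two,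
    Matrix.cons_val_three, Matrix.cons_val_four, Matrix.cons_val_succ, Matrix.head_cons,
    Matrix.vecHead, Matrix.vecTail, Function.comp, eval3_0, eval3_1, eval3_2,
    wt_0, wt_1, wt_2]
  norm_num [abs_of_nonneg, abs_of_nonpos]
  ring

set_option maxHeartbeats 1000000 in
lemma T21 (p : ℝ) : T p 2 1 = 3/4 + 1/4 * p^3 := by
  rw [T]
  simp only [mlin_f5, sum_pi_succ, sum_pi_zero, Fin.sum_univ_three, Fin.prod_univ_succ,
    Fin.prod_univ_zero, Matrix.cons_val_zero, Matrix.cons_val_one, Matrix.cons_val_two,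
    Matrix.cons_val_three, Matrix.cons_val_four, Matrix.cons_val_succ, Matrix.head_cons,
    Matrix.vecHead, Matrix.vecTail, Function.comp, eval3_0, eval3_1, eval3_2,
    wt_0, wt_1, wt_2]
  norm_num [abs_of_nonneg, abs_of_nonpos]
  ring


theorem stmt8 (p : ℝ) (hp : p ∈ Set.Icc (0 : ℝ) 1) :
    Phi 5 p f5
      = 7/4 * p - 11/4 * p ^ 2 + 7/2 * p ^ 3 - 5/2 * p ^ 4 + p ^ 5 := by
  rw [phi_decomp]
  simp only [Fin.sum_univ_three, T00, T01, T02, T10, T11, T12, T20, T21, T22, wt_0, wt_1, wt_2]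
  ring
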